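/- Suppose Assumptions (A1)–(A6) hold. Under a good run, for every pair (j, k) ∈ [m] × [n]: (E1) if a_j y_k > 0 and ⟨w_j^{(s)}, x_k⟩ > 0 for some 0 ≤ s < 1/(√n p α) − 2, then ⟨w_j^{(t)}, x_k⟩ > 0 for all s ≤ t ≤ 1/(√n p α) − 2; (E2) if a_j y_k < 0, then ⟨w_j^{(t)}, x_k⟩ ≤ (α/√m) ‖μ‖² for all 0 ≤ t ≤ 1/(√n p α) − 2; (E3) if a_j y_k < 0 and ⟨w_j^{(t)}, x_k⟩ > 0 for some 0 ≤ t ≤ 1/(√n p α) − 3, then ⟨w_j^{(t+1)}, x_k⟩ < 0. -/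

import Mathlib

open MeasureTheory ProbabilityTheory BigOperators Filter
open scoped ENNReal NNReal

noncomputable section

namespace XOR

attribute [local instance] Classical.propDecidable

/-! ### Vectors, the network, and gradient descent -/

/-- Euclidean dot product on `Fin p → ℝ`. -/
def dot {p : ℕ} (x y : Fin p → ℝ) : ℝ := ∑ k, x k * y k

/-- Euclidean norm. -/
def nrm {p : ℕ} (x : Fin p → ℝ) : ℝ := Real.sqrt (dot x x)

/-- The ReLU activation. -/
def relu (z : ℝ) : ℝ := max z 0

/-- (A choice of) the derivative of the ReLU. -/
def reluD (z : ℝ) : ℝ := if 0 < z then 1 else 0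

/-- The two-layer ReLU network `f(x; W) = ∑ j, a j * φ(⟨w_j, x⟩)`. -/
def nnet {p m : ℕ} (a : Fin m → ℝ) (W : Fin m → Fin p → ℝ) (x : Fin p → ℝ) : ℝ :=
  ∑ j, a j * relu (dot (W j) x)

/-- `g(z) = -ℓ'(z) = 1/(1+e^z)` for the logistic loss `ℓ(z) = log(1+e^{-z})`. -/
def lossG (z : ℝ) : ℝ := 1 / (1 + Real.exp z)

/-- One step of gradient descent on the first-layer weights:
`w_j^{(t+1)} = w_j^{(t)} + (α a_j / n) ∑ i g_i^{(t)} φ'(⟨w_j^{(t)}, x_i⟩) y_i x_i`. -/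
def gdStep {n p m : ℕ} (α : ℝ) (X : Fin n → Fin p → ℝ) (Y : Fin n → ℝ)
    (a : Fin m → ℝ) (W : Fin m → Fin p → ℝ) : Fin m → Fin p → ℝ :=
  fun j k => W j k + (α * a j / n) *
    ∑ i, lossG (Y i * nnet a W (X i)) * reluD (dot (W j) (X i)) * (Y i * X i k)

/-- The gradient descent iterates `W^{(t)}`. -/
def gdIter {n p m : ℕ} (α : ℝ) (X : Fin n → Fin p → ℝ) (Y : Fin n → ℝ)
    (a : Fin m → ℝ) (W0 : Fin m → Fin p → ℝ) : ℕ → Fin m → Fin p → ℝ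
  | 0 => W0
  | t + 1 => gdStep α X Y a (gdIter α X Y a W0 t)

/-- Frobenius norm of the first-layer weight matrix. -/
def frob {p m : ℕ} (W : Fin m → Fin p → ℝ) : ℝ :=
  Real.sqrt (∑ j, ∑ k, (W j k) ^ 2)

/-! ### The XOR cluster structure -/

/-- The four cluster centers `+μ₁, -μ₁, +μ₂, -μ₂`, indexed by `Fin 4`. -/
def ctr {p : ℕ} (μ1 μ2 : Fin p → ℝ) : Fin 4 → Fin p → ℝ := ![μ1, -μ1, μ2, -μ2]

/-- The clean label of each cluster. -/
def cl : Fin 4 → ℝ := ![1, 1, -1, -1]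

/-- The index of the opposite center: `ν ↦ -ν`. -/
def negIdx : Fin 4 → Fin 4 := ![1, 0, 3, 2]

/-- The set of the four cluster centers. -/
def centers {p : ℕ} (μ1 μ2 : Fin p → ℝ) : Set (Fin p → ℝ) := {μ1, -μ1, μ2, -μ2}

/-- Structural hypotheses on the means: orthogonality and equal norms. -/
def MeanHyp {p : ℕ} (μ1 μ2 : Fin p → ℝ) : Prop :=
  dot μ1 μ2 = 0 ∧ nrm μ1 = nrm μ2

/-- Basic constraints on the parameters: `η ∈ [0, 1/2)`, `α > 0`, `ω_init ≥ 0`. -/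
def ParamHyp (η α winit : ℝ) : Prop :=
  0 ≤ η ∧ η < 1 / 2 ∧ 0 < α ∧ 0 ≤ winit

/-- Assumptions (A1)–(A6), where `μn = ‖μ‖`:
(A1) `‖μ‖² ≥ C n^{0.51} √p`, (A2) `p ≥ C n² ‖μ‖²`, (A3) `η ≤ 1/C`,
(A4) `α ≤ 1/(C n p)`, (A5) `ω_init n m^{3/2} p ≤ α ‖μ‖²`, (A6) `m ≥ C n^{0.02}`. -/
def Assum (C : ℝ) (n p m : ℕ) (μn η α winit : ℝ) : Prop :=
  C * (n : ℝ) ^ (0.51 : ℝ) * Real.sqrt p ≤ μn ^ 2 ∧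
  C * (n : ℝ) ^ 2 * μn ^ 2 ≤ (p : ℝ) ∧
  η ≤ 1 / C ∧
  α ≤ 1 / (C * n * p) ∧
  winit * n * (m : ℝ) ^ ((3 : ℝ) / 2) * (p : ℝ) ≤ α * μn ^ 2 ∧
  C * (n : ℝ) ^ (0.02 : ℝ) ≤ (m : ℝ)

/-! ### The probability model

The randomness is generated from canonical sources: for each training sample a
uniform cluster index in `Fin 4`, standard Gaussian noise in `ℝ^p`, and a standard
Gaussian variable whose CDF-value is used as the (uniform) label-flip coin; for
the network, uniform signs in `Bool` for the second layer, and standard Gaussian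
first-layer noise which is scaled by `ω_init`. -/

abbrev Vec (p : ℕ) := Fin p → ℝ

/-- Sample space: cluster indices, data noise, flip coins, second-layer signs,
and unscaled first-layer initialization. -/
abbrev Sample (n p m : ℕ) :=
  (Fin n → Fin 4) × (Fin n → Vec p) × (Fin n → ℝ) × (Fin m → Bool) × (Fin m → Vec p)

/-- The standard Gaussian measure on `ℝ^p`. -/
def stdG (p : ℕ) : Measure (Vec p) := Measure.pi fun _ => gaussianReal 0 1

/-- The joint law of all randomness. -/
def sampleMeasure (n p m : ℕ) : Measure (Sample n p m) :=
  ((PMF.uniformOfFintype (Fin n → Fin 4)).toMeasure).prod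
    ((Measure.pi fun _ : Fin n => stdG p).prod
      ((Measure.pi fun _ : Fin n => gaussianReal 0 1).prod
        (((PMF.uniformOfFintype (Fin m → Bool)).toMeasure).prod
          (Measure.pi fun _ : Fin m => stdG p))))

/-- The training inputs `x_i = x̄_i + ξ_i`. -/
def trainX {n p m : ℕ} (μ1 μ2 : Vec p) (ω : Sample n p m) : Fin n → Vec p :=
  fun i => ctr μ1 μ2 (ω.1 i) + ω.2.1 i

/-- The (possibly flipped) training labels: the label is flipped iff the uniform
variable `Φ(g_i)` is `< η`, which happens with probability `η`. -/
def trainY {n p m : ℕ} (η : ℝ) (ω : Sample n p m) : Fin n → ℝ :=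
  fun i => (if cdf (gaussianReal 0 1) (ω.2.2.1 i) < η then -1 else 1) * cl (ω.1 i)

/-- The second-layer weights `a_j ∈ {± 1/√m}`. -/
def secondLayer {n p m : ℕ} (ω : Sample n p m) : Fin m → ℝ :=
  fun j => if ω.2.2.2.1 j then 1 / Real.sqrt m else -(1 / Real.sqrt m)

/-- The initialization `w_j^{(0)} ∼ N(0, ω_init² I_p)`. -/
def initW {n p m : ℕ} (winit : ℝ) (ω : Sample n p m) : Fin m → Vec p :=
  fun j k => winit * ω.2.2.2.2 j k

/-- The trained first-layer weights `W^{(t)}`. -/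
def netW {n p m : ℕ} (μ1 μ2 : Vec p) (η α winit : ℝ) (ω : Sample n p m) (t : ℕ) :
    Fin m → Vec p :=
  gdIter α (trainX μ1 μ2 ω) (trainY η ω) (secondLayer ω) (initW winit ω) t

/-- The clean test distribution `P_clean` on `ℝ^p × ℝ`. -/
def Pclean (p : ℕ) (μ1 μ2 : Vec p) : Measure (Vec p × ℝ) :=
  Measure.map (fun w : Fin 4 × Vec p => (ctr μ1 μ2 w.1 + w.2, cl w.1))
    (((PMF.uniformOfFintype (Fin 4)).toMeasure).prod (stdG p))

/-- The Gaussian measure `N(ν, I_p)` at center index `q`. -/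
def gaussAt {p : ℕ} (μ1 μ2 : Vec p) (q : Fin 4) : Measure (Vec p) :=
  Measure.map (fun z => ctr μ1 μ2 q + z) (stdG p)

/-- The clean test error of the classifier `sgn ∘ f(·; a, W)`. -/
def testErr {p m : ℕ} (μ1 μ2 : Vec p) (a : Fin m → ℝ) (W : Fin m → Vec p) : ℝ :=
  ((Pclean p μ1 μ2) {xy : Vec p × ℝ | xy.2 ≠ Real.sign (nnet a W xy.1)}).toReal

/-! ### Counts, alignment, and the "good run" conditions -/

/-- `c_ν`: number of clean samples in the cluster with center index `q`. -/
def cntC {n : ℕ} (u : Fin n → Fin 4) (Y : Fin n → ℝ) (q : Fin 4) : ℕ :=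
  (Finset.univ.filter fun i => u i = q ∧ Y i = cl q).card

/-- `n_ν`: number of noisy samples in the cluster with center index `q`. -/
def cntN {n : ℕ} (u : Fin n → Fin 4) (Y : Fin n → ℝ) (q : Fin 4) : ℕ :=
  (Finset.univ.filter fun i => u i = q ∧ Y i ≠ cl q).card

/-- The clean samples of cluster `q` activating neuron `j` for weights `W`. -/
def actC {n p m : ℕ} (u : Fin n → Fin 4) (X : Fin n → Vec p) (Y : Fin n → ℝ)
    (W : Fin m → Vec p) (q : Fin 4) (j : Fin m) : Finset (Fin n) :=
  Finset.univ.filter fun i => u i = q ∧ Y i = cl q ∧ 0 < dot (W j) (X i)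

/-- The noisy samples of cluster `q` activating neuron `j` for weights `W`. -/
def actN {n p m : ℕ} (u : Fin n → Fin 4) (X : Fin n → Vec p) (Y : Fin n → ℝ)
    (W : Fin m → Vec p) (q : Fin 4) (j : Fin m) : Finset (Fin n) :=
  Finset.univ.filter fun i => u i = q ∧ Y i ≠ cl q ∧ 0 < dot (W j) (X i)

/-- `d_{ν,j} = |C_{ν,j}| - |N_{ν,j}|`. -/
def dval {n p m : ℕ} (u : Fin n → Fin 4) (X : Fin n → Vec p) (Y : Fin n → ℝ)
    (W : Fin m → Vec p) (q : Fin 4) (j : Fin m) : ℤ :=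
  ((actC u X Y W q j).card : ℤ) - ((actN u X Y W q j).card : ℤ)

/-- `D_{ν,j} = d_{ν,j} - d_{-ν,j}`. -/
def Dval {n p m : ℕ} (u : Fin n → Fin 4) (X : Fin n → Vec p) (Y : Fin n → ℝ)
    (W : Fin m → Vec p) (q : Fin 4) (j : Fin m) : ℤ :=
  dval u X Y W q j - dval u X Y W (negIdx q) j

/-- Neuron `j` is `(ν, κ)`-aligned (w.r.t. the initialization `W0`). -/
def Aligned {n p m : ℕ} (u : Fin n → Fin 4) (X : Fin n → Vec p) (Y : Fin n → ℝ)
    (W0 : Fin m → Vec p) (κ : ℝ) (q : Fin 4) (j : Fin m) : Prop :=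
  (n : ℝ) ^ ((1 : ℝ) / 2 - κ) < (Dval u X Y W0 q j : ℝ) ∧
  max ((dval u X Y W0 (negIdx q) j : ℝ)) ((dval u X Y W0 q j : ℝ)) <
    min (cntC u Y q : ℝ) (cntC u Y (negIdx q) : ℝ) -
      2 * ((cntN u Y q : ℝ) + (cntN u Y (negIdx q) : ℝ)) - Real.sqrt n

/-- Condition (B1). -/
def CondB1 {n p : ℕ} (μ1 μ2 : Vec p) (u : Fin n → Fin 4) (X : Fin n → Vec p) : Prop :=
  ∀ k : Fin n,
    (∀ ν ∈ centers μ1 μ2, dot (X k - ctr μ1 μ2 (u k)) ν ≤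
        10 * Real.sqrt (Real.log n) * nrm μ1) ∧
    |nrm (X k) ^ 2 - p - nrm μ1 ^ 2| ≤ 10 * Real.sqrt (p * Real.log n)

/-- Condition (B2). -/
def CondB2 {n p : ℕ} (μ1 μ2 : Vec p) (u : Fin n → Fin 4) (X : Fin n → Vec p) : Prop :=
  ∀ i k : Fin n, i ≠ k →
    |dot (X i) (X k) - dot (ctr μ1 μ2 (u i)) (ctr μ1 μ2 (u k))| ≤
      10 * Real.sqrt (p * Real.log n)

/-- Condition (B3). -/
def CondB3 {n : ℕ} (ε η : ℝ) (u : Fin n → Fin 4) (Y : Fin n → ℝ) : Prop :=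
  ∀ q : Fin 4,
    |(cntC u Y q : ℝ) + (cntN u Y q : ℝ) - n / 4| ≤ Real.sqrt (ε * n * Real.log n) ∧
    |(cntN u Y q : ℝ) - η * ((cntC u Y q : ℝ) + (cntN u Y q : ℝ))| ≤
      Real.sqrt (ε * η * n * Real.log n)

/-- Condition (B4). -/
def CondB4 {n : ℕ} (ε η : ℝ) (u : Fin n → Fin 4) (Y : Fin n → ℝ) : Prop :=
  ∀ q : Fin 4,
    (n : ℝ) ^ ((1 : ℝ) / 2 - ε) ≤
      |(cntC u Y q : ℝ) + (cntN u Y q : ℝ) -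
        (cntC u Y (negIdx q) : ℝ) - (cntN u Y (negIdx q) : ℝ)| ∧
    η * (n : ℝ) ^ ((1 : ℝ) / 2 - ε) ≤ |(cntN u Y q : ℝ) - (cntN u Y (negIdx q) : ℝ)|

/-- Conditions (B1)–(B4) together. -/
def CondB {n p : ℕ} (ε : ℝ) (μ1 μ2 : Vec p) (η : ℝ) (u : Fin n → Fin 4)
    (X : Fin n → Vec p) (Y : Fin n → ℝ) : Prop :=
  CondB1 μ1 μ2 u X ∧ CondB2 μ1 μ2 u X ∧ CondB3 ε η u Y ∧ CondB4 ε η u Y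

/-- Condition (C1): `‖W^{(0)}‖_F² ≤ (3/2) ω_init² m p`. -/
def CondC1 {p m : ℕ} (winit : ℝ) (W0 : Fin m → Vec p) : Prop :=
  ∑ j, ∑ k, (W0 j k) ^ 2 ≤ 3 / 2 * winit ^ 2 * m * p

/-- The positive neurons `J_Pos`. -/
def posNeurons {m : ℕ} (a : Fin m → ℝ) : Finset (Fin m) :=
  Finset.univ.filter fun j => 0 < a j

/-- The negative neurons `J_Neg`. -/
def negNeurons {m : ℕ} (a : Fin m → ℝ) : Finset (Fin m) :=
  Finset.univ.filter fun j => a j < 0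

/-- Condition (C2): `|J_Pos| ≥ m/3` and `|J_Neg| ≥ m/3`. -/
def CondC2 {m : ℕ} (a : Fin m → ℝ) : Prop :=
  (m : ℝ) / 3 ≤ (posNeurons a).card ∧ (m : ℝ) / 3 ≤ (negNeurons a).card

/-- Condition (D1). -/
def CondD1 {n p m : ℕ} (u : Fin n → Fin 4) (X : Fin n → Vec p)
    (a : Fin m → ℝ) (W0 : Fin m → Vec p) : Prop :=
  ∀ i : Fin n,
    (m : ℝ) / 7 ≤ ((posNeurons a).filter fun j => 0 < dot (W0 j) (X i)).card ∧
    (m : ℝ) / 7 ≤ ((negNeurons a).filter fun j => 0 < dot (W0 j) (X i)).card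

/-- Condition (D2). -/
def CondD2 {n p m : ℕ} (ε : ℝ) (u : Fin n → Fin 4) (X : Fin n → Vec p) (Y : Fin n → ℝ)
    (a : Fin m → ℝ) (W0 : Fin m → Vec p) : Prop :=
  ∀ q : Fin 4, ∀ κ : ℝ, 0 ≤ κ → κ < 1 / 2 →
    (m : ℝ) * (n : ℝ) ^ (-(10 * ε)) ≤
      ((posNeurons a).filter fun j => Aligned u X Y W0 κ q j).card ∧
    (m : ℝ) * (n : ℝ) ^ (-(10 * ε)) ≤
      ((negNeurons a).filter fun j => Aligned u X Y W0 κ q j).card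

/-- Condition (D3). -/
def CondD3 {n p m : ℕ} (ε : ℝ) (u : Fin n → Fin 4) (X : Fin n → Vec p) (Y : Fin n → ℝ)
    (a : Fin m → ℝ) (W0 : Fin m → Vec p) : Prop :=
  ∀ q : Fin 4,
    (1 - 10 * (n : ℝ) ^ (-(20 * ε))) * (posNeurons a).card ≤
      ((posNeurons a).filter fun j =>
        Aligned u X Y W0 (20 * ε) q j ∨ Aligned u X Y W0 (20 * ε) (negIdx q) j).card ∧
    (1 - 10 * (n : ℝ) ^ (-(20 * ε))) * (negNeurons a).card ≤
      ((negNeurons a).filter fun j =>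
        Aligned u X Y W0 (20 * ε) q j ∨ Aligned u X Y W0 (20 * ε) (negIdx q) j).card

/-- Condition (D4). -/
def CondD4 {n p m : ℕ} (u : Fin n → Fin 4) (X : Fin n → Vec p) (Y : Fin n → ℝ)
    (a : Fin m → ℝ) (W0 : Fin m → Vec p) : Prop :=
  ∀ q : Fin 4, ∀ κ : ℝ, 0 ≤ κ → κ < 1 / 2 →
    ((n : ℝ) / 10) * ((posNeurons a).filter fun j => Aligned u X Y W0 κ q j).card ≤
      (∑ j ∈ (posNeurons a).filter (fun j => Aligned u X Y W0 κ q j),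
        ((cntC u Y q : ℝ) - (cntN u Y q : ℝ) - (dval u X Y W0 (negIdx q) j : ℝ))) ∧
    ((n : ℝ) / 10) * ((negNeurons a).filter fun j => Aligned u X Y W0 κ q j).card ≤
      (∑ j ∈ (negNeurons a).filter (fun j => Aligned u X Y W0 κ q j),
        ((cntC u Y q : ℝ) - (cntN u Y q : ℝ) - (dval u X Y W0 (negIdx q) j : ℝ)))

/-- Conditions (D1)–(D4) together. -/
def CondD {n p m : ℕ} (ε : ℝ) (u : Fin n → Fin 4) (X : Fin n → Vec p) (Y : Fin n → ℝ)
    (a : Fin m → ℝ) (W0 : Fin m → Vec p) : Prop :=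
  CondD1 u X a W0 ∧ CondD2 ε u X Y a W0 ∧ CondD3 ε u X Y a W0 ∧ CondD4 u X Y a W0

/-- A "good run": conditions (B1)–(B4), (C1)–(C2) and (D1)–(D4) all hold. -/
def GoodRun {n p m : ℕ} (ε : ℝ) (μ1 μ2 : Vec p) (η winit : ℝ) (u : Fin n → Fin 4)
    (X : Fin n → Vec p) (Y : Fin n → ℝ) (a : Fin m → ℝ) (W0 : Fin m → Vec p) : Prop :=
  CondB ε μ1 μ2 η u X Y ∧ CondC1 winit W0 ∧ CondC2 a ∧ CondD ε u X Y a W0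

/-- Labels take values in `{±1}`. -/
def ModelData {n : ℕ} (Y : Fin n → ℝ) : Prop := ∀ i, Y i = 1 ∨ Y i = -1

/-- Second-layer weights take values in `{±1/√m}`. -/
def ModelLayer {m : ℕ} (a : Fin m → ℝ) : Prop :=
  ∀ j, a j = 1 / Real.sqrt m ∨ a j = -(1 / Real.sqrt m)

end XOR

namespace XOR

attribute [local instance] Classical.propDecidable

/-! ### Auxiliary lemmas for the proof -/

section AuxLemmas

variable {q : ℕ}

lemma dot_self_nonneg' (x : Vec q) : 0 ≤ dot x x :=
  Finset.sum_nonneg fun _ _ => mul_self_nonneg _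

lemma nrm_sq' (x : Vec q) : nrm x ^ 2 = dot x x :=
  Real.sq_sqrt (dot_self_nonneg' x)

lemma dot_sq_le' (x y : Vec q) : (dot x y)^2 ≤ dot x x * dot y y := by
  have h := Finset.sum_mul_sq_le_sq_mul_sq Finset.univ x y
  simpa [dot, pow_two] using h

lemma abs_le_of_sq_le' {a b : ℝ} (h : a^2 ≤ b^2) (hb : 0 ≤ b) : |a| ≤ b := by
  have h3 := Real.sqrt_le_sqrt h
  rwa [Real.sqrt_sq_eq_abs, Real.sqrt_sq hb] at h3

lemma nrm_nonneg' (x : Vec q) : 0 ≤ nrm x := Real.sqrt_nonneg _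

lemma abs_dot_le' (x y : Vec q) : |dot x y| ≤ nrm x * nrm y := by
  refine abs_le_of_sq_le' ?_ (mul_nonneg (nrm_nonneg' x) (nrm_nonneg' y))
  rw [mul_pow, nrm_sq', nrm_sq']
  exact dot_sq_le' x y

lemma dot_neg_left' (x y : Vec q) : dot (-x) y = -dot x y := by
  simp [dot, Finset.sum_neg_distrib]

lemma dot_neg_right' (x y : Vec q) : dot x (-y) = -dot x y := by
  simp [dot, Finset.sum_neg_distrib]

lemma dot_comm' (x y : Vec q) : dot x y = dot y x := by
  simp [dot, mul_comm]

lemma lossG_pos' (z : ℝ) : 0 < lossG z := by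
  have : 0 < 1 + Real.exp z := by positivity
  exact div_pos one_pos this

lemma lossG_le_one' (z : ℝ) : lossG z ≤ 1 := by
  have h : 0 < 1 + Real.exp z := by positivity
  rw [lossG, div_le_one h]
  nlinarith [Real.exp_pos z]

lemma lossG_le_of' {z : ℝ} (hz : -(1/4) ≤ z) : lossG z ≤ 3/5 := by
  have h : 0 < 1 + Real.exp z := by positivity
  rw [lossG, div_le_iff₀ h]
  have h2 : Real.exp (-(1/4)) ≤ Real.exp z := Real.exp_le_exp.2 hz
  have h3 : (3/4 : ℝ) ≤ Real.exp (-(1/4)) := by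
    have := Real.add_one_le_exp (-(1/4) : ℝ); linarith
  linarith

lemma lossG_ge_of' {z : ℝ} (hz : z ≤ 1) : 1/4 ≤ lossG z := by
  have h : 0 < 1 + Real.exp z := by positivity
  rw [lossG, le_div_iff₀ h]
  have h2 : Real.exp z ≤ Real.exp 1 := Real.exp_le_exp.2 hz
  have h3 : Real.exp 1 ≤ 3 := by
    have := Real.exp_one_lt_d9; linarith
  linarith

lemma reluD_nonneg' (z : ℝ) : 0 ≤ reluD z := by unfold reluD; split <;> norm_num
lemma reluD_le_one' (z : ℝ) : reluD z ≤ 1 := by unfold reluD; split <;> norm_num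
lemma reluD_of_pos' {z : ℝ} (h : 0 < z) : reluD z = 1 := by simp [reluD, h]
lemma reluD_of_nonpos' {z : ℝ} (h : z ≤ 0) : reluD z = 0 := by simp [reluD, not_lt.mpr h]
lemma relu_nonneg' (z : ℝ) : 0 ≤ relu z := le_max_right _ _
lemma relu_le_abs' (z : ℝ) : relu z ≤ |z| := max_le (le_abs_self z) (abs_nonneg z)

lemma dot_gdStep' {n p m : ℕ} (α : ℝ) (X : Fin n → Fin p → ℝ) (Y : Fin n → ℝ)
    (a : Fin m → ℝ) (W : Fin m → Fin p → ℝ) (j : Fin m) (x : Vec p) :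
    dot (gdStep α X Y a W j) x = dot (W j) x + (α * a j / n) *
      ∑ i, (lossG (Y i * nnet a W (X i)) * reluD (dot (W j) (X i)) * Y i) * dot (X i) x := by
  unfold dot gdStep
  rw [Finset.sum_congr rfl (fun k _ => add_mul _ _ _), Finset.sum_add_distrib]
  congr 1
  calc ∑ k : Fin p, (α * a j / n *
        ∑ i, lossG (Y i * nnet a W (X i)) * reluD (dot (W j) (X i)) * (Y i * X i k)) * x k
      = ∑ k : Fin p, ∑ i, α * a j / n *
          (lossG (Y i * nnet a W (X i)) * reluD (dot (W j) (X i)) * (Y i * X i k * x k)) := by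
        refine Finset.sum_congr rfl fun k _ => ?_
        rw [mul_assoc, Finset.sum_mul, Finset.mul_sum]
        exact Finset.sum_congr rfl fun i _ => by ring
    _ = ∑ i, ∑ k : Fin p, α * a j / n *
          (lossG (Y i * nnet a W (X i)) * reluD (dot (W j) (X i)) * (Y i * X i k * x k)) :=
        Finset.sum_comm
    _ = α * a j / n * ∑ i, (lossG (Y i * nnet a W (X i)) * reluD (dot (W j) (X i)) * Y i) *
          ∑ k, X i k * x k := by
        rw [Finset.mul_sum]
        refine Finset.sum_congr rfl fun i _ => ?_
        rw [mul_assoc, Finset.mul_sum, Finset.mul_sum, Finset.mul_sum]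
        exact Finset.sum_congr rfl fun k _ => by ring

end AuxLemmas

set_option maxHeartbeats 4000000

/-- Corollary on activation patterns, (E1)–(E3). -/
theorem activation_patterns :
    ∀ ε : ℝ, 0 < ε → ε < 1 / 4000 →
      ∃ (C₀ : ℝ) (N₀ : ℕ),
        ∀ C : ℝ, C₀ ≤ C →
        ∀ (n p m : ℕ) (μ1 μ2 : Vec p) (η α winit : ℝ)
          (u : Fin n → Fin 4) (X : Fin n → Vec p) (Y : Fin n → ℝ)
          (a : Fin m → ℝ) (W0 : Fin m → Vec p),
          N₀ ≤ n →
          MeanHyp μ1 μ2 →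
          ParamHyp η α winit →
          Assum C n p m (nrm μ1) η α winit →
          ModelData Y →
          ModelLayer a →
          GoodRun ε μ1 μ2 η winit u X Y a W0 →
          ∀ (j : Fin m) (k : Fin n),
            -- (E1)
            (0 < a j * Y k →
              ∀ s t : ℕ, (s : ℝ) < 1 / (Real.sqrt n * p * α) - 2 →
                (t : ℝ) ≤ 1 / (Real.sqrt n * p * α) - 2 → s ≤ t →
                0 < dot (gdIter α X Y a W0 s j) (X k) →
                0 < dot (gdIter α X Y a W0 t j) (X k)) ∧
            -- (E2)
            (a j * Y k < 0 →
              ∀ t : ℕ, (t : ℝ) ≤ 1 / (Real.sqrt n * p * α) - 2 →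
                dot (gdIter α X Y a W0 t j) (X k) ≤ α / Real.sqrt m * nrm μ1 ^ 2) ∧
            -- (E3)
            (a j * Y k < 0 →
              ∀ t : ℕ, (t : ℝ) ≤ 1 / (Real.sqrt n * p * α) - 3 →
                0 < dot (gdIter α X Y a W0 t j) (X k) →
                dot (gdIter α X Y a W0 (t + 1) j) (X k) < 0) := by
  intro ε hε1 hε2
  refine ⟨400, 400, ?_⟩
  intro C hC n p m μ1 μ2 η α winit u X Y a W0 hn hMean hPar hAss hMD hML hGR j k
  obtain ⟨hηa, hηb, hα, hw0⟩ := hPar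
  obtain ⟨hA1, hA2, hA3, hA4, hA5, hA6⟩ := hAss
  obtain ⟨⟨hB1, hB2, _hB3, _hB4⟩, hCC1, _hCC2, _hD⟩ := hGR
  by_cases hp0 : p = 0
  · subst hp0
    have hd : ∀ v w : Vec 0, dot v w = 0 := fun v w => by simp [dot]
    have hμ : nrm μ1 = 0 := by rw [nrm, hd, Real.sqrt_zero]
    refine ⟨?_, ?_, ?_⟩
    · intro _ s t _ _ _ hpos
      rw [hd] at hpos; exact absurd hpos (lt_irrefl 0)
    · intro _ t _
      rw [hd, hμ]; norm_num
    · intro _ t _ hpos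
      rw [hd] at hpos; exact absurd hpos (lt_irrefl 0)
  -- main case
  set M := nrm μ1 ^ 2 with hMdef
  set sm := Real.sqrt m with hsmdef
  set sn := Real.sqrt n with hsndef
  set T := 1 / (sn * (p:ℝ) * α) with hTdef
  set Wt := gdIter α X Y a W0 with hWtdef
  have hp1 : (1:ℝ) ≤ (p:ℝ) := by exact_mod_cast Nat.one_le_iff_ne_zero.mpr hp0
  have hppos : (0:ℝ) < (p:ℝ) := by linarith only [hp1]
  have hn400 : (400:ℝ) ≤ (n:ℝ) := by exact_mod_cast hn
  have hC400 : (400:ℝ) ≤ C := hC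
  have hn1 : (1:ℝ) ≤ (n:ℝ) := by linarith only [hn400]
  have hnpos : (0:ℝ) < (n:ℝ) := by linarith only [hn400]
  have hr051 : (1:ℝ) ≤ (n:ℝ)^(0.51:ℝ) := Real.one_le_rpow hn1 (by norm_num)
  have hr002 : (1:ℝ) ≤ (n:ℝ)^(0.02:ℝ) := Real.one_le_rpow hn1 (by norm_num)
  have hsp1 : (1:ℝ) ≤ Real.sqrt p := by
    rw [show (1:ℝ) = Real.sqrt 1 by simp]
    exact Real.sqrt_le_sqrt hp1
  have hca : (0:ℝ) ≤ C := by linarith only [hC400]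
  have t1 : (400:ℝ) ≤ C*(n:ℝ)^(0.51:ℝ) := by
    have h := mul_le_mul_of_nonneg_left hr051 hca
    linarith only [h, hC400]
  have t2 : (400:ℝ) ≤ C*(n:ℝ)^(0.51:ℝ)*Real.sqrt p := by
    have h := mul_le_mul_of_nonneg_left hsp1 (by linarith only [t1] : (0:ℝ) ≤ C*(n:ℝ)^(0.51:ℝ))
    linarith only [h, t1]
  have hMpos : (0:ℝ) < M := by linarith only [hA1, t2]
  have hm400 : (400:ℝ) ≤ (m:ℝ) := by
    have h := mul_le_mul_of_nonneg_left hr002 hca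
    linarith only [h, hA6, hC400]
  have hm1 : (1:ℝ) ≤ (m:ℝ) := by linarith only [hm400]
  have hsm1 : (1:ℝ) ≤ sm := by
    rw [hsmdef, show (1:ℝ) = Real.sqrt 1 by simp]
    exact Real.sqrt_le_sqrt hm1
  have hsmpos : (0:ℝ) < sm := by linarith only [hsm1]
  have hsn20 : (20:ℝ) ≤ sn := by
    rw [hsndef, show (20:ℝ) = Real.sqrt 400 by
      rw [show (400:ℝ) = 20^2 by norm_num, Real.sqrt_sq]; norm_num]
    exact Real.sqrt_le_sqrt hn400
  have hsnpos : (0:ℝ) < sn := by linarith only [hsn20]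
  have hmm : sm^2 = (m:ℝ) := Real.sq_sqrt (by positivity)
  -- key scalar inequalities
  have hplog : 10 * Real.sqrt ((p:ℝ) * Real.log n) ≤ M/10 := by
    have l1 : Real.log n ≤ (n:ℝ) := by
      have h := Real.log_le_sub_one_of_pos hnpos; linarith only [h]
    have l2 : Real.sqrt ((p:ℝ)*Real.log n) ≤ Real.sqrt p * (n:ℝ)^(0.51:ℝ) := by
      rw [Real.sqrt_mul (by positivity)]
      have h1 : Real.sqrt (Real.log n) ≤ Real.sqrt n := Real.sqrt_le_sqrt l1
      have h2 : Real.sqrt (n:ℝ) ≤ (n:ℝ)^(0.51:ℝ) := by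
        rw [Real.sqrt_eq_rpow]
        exact Real.rpow_le_rpow_of_exponent_le hn1 (by norm_num)
      calc Real.sqrt p * Real.sqrt (Real.log n) ≤ Real.sqrt p * Real.sqrt n :=
            mul_le_mul_of_nonneg_left h1 (Real.sqrt_nonneg _)
        _ ≤ Real.sqrt p * (n:ℝ)^(0.51:ℝ) :=
            mul_le_mul_of_nonneg_left h2 (Real.sqrt_nonneg _)
    have l4 : 400*((n:ℝ)^(0.51:ℝ)*Real.sqrt p) ≤ M := by
      have h := mul_nonneg (sub_nonneg.mpr hC400)
        (by positivity : (0:ℝ) ≤ (n:ℝ)^(0.51:ℝ)*Real.sqrt p)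
      nlinarith only [hA1, h]
    linarith only [l2, l4, Real.sqrt_nonneg ((p:ℝ)*Real.log n)]
  have hCn2 : (8:ℝ)*(n:ℝ) ≤ C*(n:ℝ)^2 := by
    have hCn : (8:ℝ) ≤ C*(n:ℝ) := by
      have h := mul_le_mul hC400 hn400 (by norm_num : (0:ℝ) ≤ 400) hca
      linarith only [h]
    have h := mul_nonneg (sub_nonneg.mpr hCn) hnpos.le
    nlinarith only [h]
  have h8nM : 8*(n:ℝ)*M ≤ (p:ℝ) := by
    have h := mul_le_mul_of_nonneg_right hCn2 hMpos.le
    nlinarith only [h, hA2]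
  have h2M : 2*M ≤ (p:ℝ) := by
    have h2n : (2:ℝ) ≤ 8*(n:ℝ) := by linarith only [hn400]
    have h := mul_le_mul_of_nonneg_right h2n hMpos.le
    nlinarith only [h, h8nM]
  have hnM : (11/10)*(n:ℝ)*M ≤ (p:ℝ) := by
    have h2n : (11/10)*(n:ℝ) ≤ 8*(n:ℝ) := by linarith only [hnpos]
    have h := mul_le_mul_of_nonneg_right h2n hMpos.le
    nlinarith only [h, h8nM]
  -- data bounds
  have e11 : dot μ1 μ1 = M := (nrm_sq' μ1).symm
  have e22 : dot μ2 μ2 = M := by rw [← nrm_sq' μ2, hMdef, hMean.2]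
  have e12 : dot μ1 μ2 = 0 := hMean.1
  have e21 : dot μ2 μ1 = 0 := by rw [dot_comm']; exact hMean.1
  have hctr : ∀ q q' : Fin 4, |dot (ctr μ1 μ2 q) (ctr μ1 μ2 q')| ≤ M := by
    intro q q'
    fin_cases q <;> fin_cases q' <;>
      simp [ctr, dot_neg_left', dot_neg_right', e11, e22, e12, e21, abs_neg,
        abs_of_nonneg hMpos.le] <;> linarith only [hMpos]
  have hXc : ∀ i i' : Fin n, i ≠ i' → |dot (X i) (X i')| ≤ (11/10)*M := by
    intro i i' hne
    have h1 := hB2 i i' hne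
    have h2 := hctr (u i) (u i')
    have h3 : |dot (X i) (X i')| ≤
        |dot (X i) (X i') - dot (ctr μ1 μ2 (u i)) (ctr μ1 μ2 (u i'))| +
        |dot (ctr μ1 μ2 (u i)) (ctr μ1 μ2 (u i'))| := by
      have h := abs_add_le (dot (X i) (X i') - dot (ctr μ1 μ2 (u i)) (ctr μ1 μ2 (u i')))
        (dot (ctr μ1 μ2 (u i)) (ctr μ1 μ2 (u i')))
      simpa using h
    linarith only [hplog, h1, h2, h3]
  have hXs : ∀ i, (p:ℝ) ≤ dot (X i) (X i) ∧ dot (X i) (X i) ≤ 2*(p:ℝ) := by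
    intro i
    have h1 := (hB1 i).2
    rw [nrm_sq'] at h1
    obtain ⟨h2a, h2b⟩ := abs_le.mp h1
    constructor
    · linarith only [hplog, hMpos, h2a, hMdef]
    · linarith only [hplog, hMpos, h2b, h2M, hMdef]
  have haj : ∀ j' : Fin m, |a j'| = 1/sm := by
    intro j'
    rcases hML j' with h|h <;> rw [h]
    · exact abs_of_pos (by positivity)
    · rw [abs_neg]; exact abs_of_pos (by positivity)
  have hY1 : ∀ i, |Y i| = 1 := fun i => by rcases hMD i with h|h <;> rw [h] <;> norm_num
  -- initialization bound
  have hW0d : ∀ (j' : Fin m) (i : Fin n), |dot (W0 j') (X i)| ≤ 2*winit*sm*(p:ℝ) := by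
    intro j' i
    have hw : dot (W0 j') (W0 j') ≤ 3/2*winit^2*m*p := by
      have h1 : dot (W0 j') (W0 j') = ∑ k', (W0 j' k')^2 := by simp [dot, pow_two]
      rw [h1]
      exact le_trans (Finset.single_le_sum (f := fun j'' => ∑ k', (W0 j'' k')^2)
        (fun _ _ => Finset.sum_nonneg fun _ _ => sq_nonneg _) (Finset.mem_univ j')) hCC1
    have hx := (hXs i).2
    refine abs_le_of_sq_le' ?_ (by positivity)
    have hcs := dot_sq_le' (W0 j') (X i)
    have h2 : dot (W0 j') (W0 j') * dot (X i) (X i) ≤ (3/2*winit^2*m*p)*(2*p) :=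
      mul_le_mul hw hx (dot_self_nonneg' _) (by positivity)
    have h3 : (2*winit*sm*(p:ℝ))^2 = 4*winit^2*(m:ℝ)*(p:ℝ)^2 := by
      rw [show (2*winit*sm*(p:ℝ))^2 = 4*winit^2*sm^2*(p:ℝ)^2 by ring, hmm]
    rw [h3]
    have h4 : (0:ℝ) ≤ winit^2*(m:ℝ)*(p:ℝ)^2 :=
      mul_nonneg (mul_nonneg (sq_nonneg winit) (Nat.cast_nonneg m)) (sq_nonneg (p:ℝ))
    nlinarith only [hcs, h2, h4]
  -- per-step drift bound
  have habsaj : ∀ j' : Fin m, |α * a j' / (n:ℝ)| = α/((n:ℝ)*sm) := by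
    intro j'
    rw [abs_div, abs_mul, haj, abs_of_pos hα, Nat.abs_cast]
    ring
  have hstepabs : ∀ (W : Fin m → Vec p) (j' : Fin m) (i0 : Fin n),
      |dot (gdStep α X Y a W j') (X i0) - dot (W j') (X i0)| ≤ 3*α*(p:ℝ)/((n:ℝ)*sm) := by
    intro W j' i0
    rw [dot_gdStep', add_sub_cancel_left, abs_mul, habsaj]
    have hcb : ∀ i, |lossG (Y i * nnet a W (X i)) * reluD (dot (W j') (X i)) * Y i| ≤ 1 := by
      intro i
      rw [abs_mul, abs_mul, hY1 i, mul_one]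
      have l1 : |lossG (Y i * nnet a W (X i))| ≤ 1 :=
        abs_le.mpr ⟨by linarith only [lossG_pos' (Y i * nnet a W (X i))], lossG_le_one' _⟩
      have l2 : |reluD (dot (W j') (X i))| ≤ 1 :=
        abs_le.mpr ⟨by linarith only [reluD_nonneg' (dot (W j') (X i))], reluD_le_one' _⟩
      calc |lossG (Y i * nnet a W (X i))| * |reluD (dot (W j') (X i))| ≤ 1 * 1 :=
            mul_le_mul l1 l2 (abs_nonneg _) (by norm_num)
        _ = 1 := by norm_num
    have h2 : |∑ i, (lossG (Y i * nnet a W (X i)) * reluD (dot (W j') (X i)) * Y i) *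
        dot (X i) (X i0)| ≤ 3*(p:ℝ) := by
      have hterm : ∀ i, |(lossG (Y i * nnet a W (X i)) * reluD (dot (W j') (X i)) * Y i) *
          dot (X i) (X i0)| ≤ if i = i0 then 2*(p:ℝ) else (11/10)*M := by
        intro i
        rw [abs_mul]
        by_cases hi : i = i0
        · subst hi
          rw [if_pos rfl]
          have hh : |dot (X i) (X i)| ≤ 2*(p:ℝ) := by
            rw [abs_of_nonneg (dot_self_nonneg' _)]; exact (hXs i).2
          calc _ ≤ 1 * (2*(p:ℝ)) := mul_le_mul (hcb i) hh (abs_nonneg _) (by norm_num)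
            _ = 2*(p:ℝ) := by norm_num
        · rw [if_neg hi]
          calc _ ≤ 1 * ((11/10)*M) :=
                mul_le_mul (hcb i) (hXc i i0 hi) (abs_nonneg _) (by norm_num)
            _ = (11/10)*M := by norm_num
      have hsplit : ∑ i, |(lossG (Y i * nnet a W (X i)) * reluD (dot (W j') (X i)) * Y i) *
          dot (X i) (X i0)| ≤ ∑ i, (if i = i0 then 2*(p:ℝ) else (11/10)*M) :=
        Finset.sum_le_sum fun i _ => hterm i
      have hval : ∑ i, (if i = i0 then 2*(p:ℝ) else (11/10)*M) ≤ 3*(p:ℝ) := by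
        rw [← Finset.add_sum_erase _ _ (Finset.mem_univ i0), if_pos rfl]
        have he1 : ∑ i ∈ Finset.univ.erase i0, (if i = i0 then 2*(p:ℝ) else (11/10)*M) =
            ∑ _i ∈ Finset.univ.erase i0, (11/10)*M :=
          Finset.sum_congr rfl fun i hi => if_neg (Finset.mem_erase.mp hi).1
        rw [he1, Finset.sum_const, nsmul_eq_mul]
        have hcard : ((Finset.univ.erase i0).card : ℝ) ≤ (n:ℝ) := by
          have h := Finset.card_erase_le (a := i0) (s := (Finset.univ : Finset (Fin n)))
          calc ((Finset.univ.erase i0).card : ℝ) ≤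
              ((Finset.univ : Finset (Fin n)).card : ℝ) := by exact_mod_cast h
            _ = (n:ℝ) := by simp
        have h := mul_le_mul_of_nonneg_right hcard (by positivity : (0:ℝ) ≤ (11/10)*M)
        linarith only [h, hnM]
      exact le_trans (Finset.abs_sum_le_sum_abs _ _) (le_trans hsplit hval)
    calc α/((n:ℝ)*sm) * |∑ i, (lossG (Y i * nnet a W (X i)) * reluD (dot (W j') (X i)) * Y i) *
          dot (X i) (X i0)| ≤ α/((n:ℝ)*sm) * (3*(p:ℝ)) :=
          mul_le_mul_of_nonneg_left h2 (by positivity)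
      _ = 3*α*(p:ℝ)/((n:ℝ)*sm) := by ring
  have hdrift : ∀ (t : ℕ) (j' : Fin m) (i : Fin n),
      |dot (Wt t j') (X i) - dot (W0 j') (X i)| ≤ t * (3*α*(p:ℝ)/((n:ℝ)*sm)) := by
    intro t j' i
    induction t with
    | zero => simp [hWtdef, gdIter]
    | succ t ih =>
      have h1 := hstepabs (Wt t) j' i
      have h2 : Wt (t+1) = gdStep α X Y a (Wt t) := rfl
      have h3 := abs_sub_le (dot (Wt (t+1) j') (X i)) (dot (Wt t j') (X i)) (dot (W0 j') (X i))
      rw [h2] at h3 ⊢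
      push_cast
      linarith only [h1, ih, h3]
  have habsW : ∀ (t : ℕ) (j' : Fin m) (i : Fin n), (t:ℝ) ≤ T →
      |dot (Wt t j') (X i)| ≤ 2*winit*sm*(p:ℝ) + 3/(sn*(n:ℝ)*sm) := by
    intro t j' i ht
    have h1 := hdrift t j' i
    have h2 := hW0d j' i
    have hB0 : (0:ℝ) ≤ 3*α*(p:ℝ)/((n:ℝ)*sm) := by positivity
    have h5 : T*(3*α*(p:ℝ)/((n:ℝ)*sm)) = 3/(sn*(n:ℝ)*sm) := by
      rw [hTdef]; field_simp
    have h4 : (t:ℝ)*(3*α*(p:ℝ)/((n:ℝ)*sm)) ≤ 3/(sn*(n:ℝ)*sm) := by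
      rw [← h5]; exact mul_le_mul_of_nonneg_right ht hB0
    have h6 := abs_add_le (dot (Wt t j') (X i) - dot (W0 j') (X i)) (dot (W0 j') (X i))
    simp only [sub_add_cancel] at h6
    linarith only [h1, h2, h4, h6]
  -- bound on the network output and loss derivative
  have h2wmp : 2*winit*(m:ℝ)*(p:ℝ) ≤ α*M := by
    have hm32 : (m:ℝ) ≤ (m:ℝ)^((3:ℝ)/2) := by
      calc (m:ℝ) = (m:ℝ)^(1:ℝ) := (Real.rpow_one _).symm
        _ ≤ (m:ℝ)^((3:ℝ)/2) := Real.rpow_le_rpow_of_exponent_le hm1 (by norm_num)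
    have hinner : 2*(m:ℝ) ≤ (n:ℝ)*(m:ℝ)^((3:ℝ)/2) := by
      have ha1 := mul_le_mul_of_nonneg_left hm32 hnpos.le
      have h2n : (2:ℝ) ≤ (n:ℝ) := by linarith only [hn400]
      have ha2 := mul_le_mul_of_nonneg_right h2n (Nat.cast_nonneg (α := ℝ) m)
      linarith only [ha1, ha2]
    have h := mul_nonneg (mul_nonneg hw0 hppos.le) (sub_nonneg.mpr hinner)
    nlinarith only [hA5, h]
  have hαM : α*M ≤ 1/100 := by
    have h6 : α*(C*(n:ℝ)*(p:ℝ)) ≤ 1 := by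
      calc α*(C*(n:ℝ)*(p:ℝ)) ≤ (1/(C*(n:ℝ)*(p:ℝ)))*(C*(n:ℝ)*(p:ℝ)) :=
            mul_le_mul_of_nonneg_right hA4 (by positivity)
        _ = 1 := by field_simp
    have h7 : (α*(C*(n:ℝ)*(p:ℝ)))*(C*(n:ℝ)^2*M) ≤ 1*(p:ℝ) :=
      mul_le_mul h6 hA2 (by positivity) (by norm_num)
    have h8 : α*M*(C*C*(n:ℝ)^3*(p:ℝ)) ≤ (p:ℝ) := by nlinarith only [h7]
    have hCC : (160000:ℝ) ≤ C*C := by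
      have h := mul_le_mul hC400 hC400 (by norm_num : (0:ℝ) ≤ 400) hca
      linarith only [h]
    have hn2 : (1:ℝ) ≤ (n:ℝ)^2 := by
      have h := mul_le_mul hn1 hn1 (by norm_num : (0:ℝ) ≤ 1) hnpos.le
      nlinarith only [h]
    have hn3 : (1:ℝ) ≤ (n:ℝ)^3 := by
      have h := mul_le_mul hn2 hn1 (by norm_num : (0:ℝ) ≤ 1)
        (by positivity : (0:ℝ) ≤ (n:ℝ)^2)
      nlinarith only [h]
    have hCn3 : (100:ℝ) ≤ C*C*(n:ℝ)^3 := by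
      have h := mul_le_mul hCC hn3 (by norm_num : (0:ℝ) ≤ 1)
        (by positivity : (0:ℝ) ≤ C*C)
      nlinarith only [h]
    have hh := mul_le_mul_of_nonneg_left hCn3
      (mul_nonneg (mul_nonneg hα.le hMpos.le) hppos.le)
    nlinarith only [h8, hh, hppos, mul_nonneg hα.le hMpos.le]
  have hfb : ∀ (t : ℕ) (i : Fin n), (t:ℝ) ≤ T → |nnet a (Wt t) (X i)| ≤ 1/4 := by
    intro t i ht
    have h1 : |nnet a (Wt t) (X i)| ≤ ∑ j', |a j' * relu (dot (Wt t j') (X i))| :=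
      Finset.abs_sum_le_sum_abs _ _
    have h2 : ∀ j', |a j' * relu (dot (Wt t j') (X i))| ≤
        (1/sm) * (2*winit*sm*(p:ℝ) + 3/(sn*(n:ℝ)*sm)) := by
      intro j'
      rw [abs_mul, haj]
      have hr : |relu (dot (Wt t j') (X i))| ≤ |dot (Wt t j') (X i)| := by
        rw [abs_of_nonneg (relu_nonneg' _)]; exact relu_le_abs' _
      exact mul_le_mul_of_nonneg_left (le_trans hr (habsW t j' i ht)) (by positivity)
    have h3 : ∑ j', |a j' * relu (dot (Wt t j') (X i))| ≤
        (m:ℝ) * ((1/sm) * (2*winit*sm*(p:ℝ) + 3/(sn*(n:ℝ)*sm))) := by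
      calc ∑ j', |a j' * relu (dot (Wt t j') (X i))| ≤
          ∑ _j' : Fin m, (1/sm) * (2*winit*sm*(p:ℝ) + 3/(sn*(n:ℝ)*sm)) :=
            Finset.sum_le_sum fun j' _ => h2 j'
        _ = (m:ℝ) * ((1/sm) * (2*winit*sm*(p:ℝ) + 3/(sn*(n:ℝ)*sm))) := by
            rw [Finset.sum_const, nsmul_eq_mul]; simp
    have h4 : (m:ℝ) * ((1/sm) * (2*winit*sm*(p:ℝ) + 3/(sn*(n:ℝ)*sm))) =
        2*winit*(m:ℝ)*(p:ℝ) + 3/(sn*(n:ℝ)) := by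
      rw [← hmm]; field_simp
    have h6 : 3/(sn*(n:ℝ)) ≤ 1/8 := by
      rw [div_le_iff₀ (by positivity)]
      have h := mul_le_mul hsn20 hn400 (by norm_num : (0:ℝ) ≤ 400) (by linarith only [hsn20])
      linarith only [h]
    linarith only [h1, h3, h4, h6, h2wmp, hαM]
  have hzb : ∀ (t : ℕ) (i : Fin n), (t:ℝ) ≤ T → |Y i * nnet a (Wt t) (X i)| ≤ 1/4 := by
    intro t i ht
    rw [abs_mul, hY1 i, one_mul]
    exact hfb t i ht
  have hgub : ∀ (t : ℕ) (i : Fin n), (t:ℝ) ≤ T →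
      lossG (Y i * nnet a (Wt t) (X i)) ≤ 3/5 := by
    intro t i ht
    exact lossG_le_of' (by linarith only [(abs_le.mp (hzb t i ht)).1])
  have hglb : ∀ (t : ℕ) (i : Fin n), (t:ℝ) ≤ T →
      1/4 ≤ lossG (Y i * nnet a (Wt t) (X i)) := by
    intro t i ht
    exact lossG_ge_of' (by linarith only [(abs_le.mp (hzb t i ht)).2])
  -- the key one-step estimates
  have hkey : ∀ t : ℕ, (t:ℝ) ≤ T →
      (0 < dot (Wt t j) (X k) →
        ((a j * Y k = 1/sm →
            dot (Wt t j) (X k) + (4/3)*(α*M/sm) ≤ dot (Wt (t+1) j) (X k)) ∧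
         (a j * Y k = -(1/sm) →
            dot (Wt (t+1) j) (X k) ≤ dot (Wt t j) (X k) - (4/3)*(α*M/sm)))) ∧
      (dot (Wt t j) (X k) ≤ 0 →
        |dot (Wt (t+1) j) (X k) - dot (Wt t j) (X k)| ≤ (2/3)*(α*M/sm)) := by
    intro t ht
    have hnext : dot (Wt (t+1) j) (X k) = dot (Wt t j) (X k) +
        (α*a j/(n:ℝ))*((lossG (Y k * nnet a (Wt t) (X k)) * reluD (dot (Wt t j) (X k)) * Y k) *
          dot (X k) (X k)) +
        (α*a j/(n:ℝ))*∑ i ∈ Finset.univ.erase k,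
          (lossG (Y i * nnet a (Wt t) (X i)) * reluD (dot (Wt t j) (X i)) * Y i) *
            dot (X i) (X k) := by
      rw [show Wt (t+1) = gdStep α X Y a (Wt t) from rfl, dot_gdStep',
        ← Finset.add_sum_erase _ _ (Finset.mem_univ k)]
      ring
    have hrest : |(α*a j/(n:ℝ))*∑ i ∈ Finset.univ.erase k,
        (lossG (Y i * nnet a (Wt t) (X i)) * reluD (dot (Wt t j) (X i)) * Y i) *
          dot (X i) (X k)| ≤ (2/3)*(α*M/sm) := by
      rw [abs_mul, habsaj]
      have hterm : ∀ i ∈ Finset.univ.erase k,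
          |(lossG (Y i * nnet a (Wt t) (X i)) * reluD (dot (Wt t j) (X i)) * Y i) *
            dot (X i) (X k)| ≤ (33/50)*M := by
        intro i hi
        have hik : i ≠ k := (Finset.mem_erase.mp hi).1
        rw [abs_mul]
        have hc : |lossG (Y i * nnet a (Wt t) (X i)) * reluD (dot (Wt t j) (X i)) * Y i|
            ≤ 3/5 := by
          rw [abs_mul, abs_mul, hY1 i, mul_one]
          have l1 : |lossG (Y i * nnet a (Wt t) (X i))| ≤ 3/5 :=
            abs_le.mpr ⟨by linarith only [lossG_pos' (Y i * nnet a (Wt t) (X i))], hgub t i ht⟩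
          have l2 : |reluD (dot (Wt t j) (X i))| ≤ 1 :=
            abs_le.mpr ⟨by linarith only [reluD_nonneg' (dot (Wt t j) (X i))], reluD_le_one' _⟩
          calc |lossG (Y i * nnet a (Wt t) (X i))| * |reluD (dot (Wt t j) (X i))| ≤ (3/5)*1 :=
                mul_le_mul l1 l2 (abs_nonneg _) (by norm_num)
            _ = 3/5 := by norm_num
        calc |lossG (Y i * nnet a (Wt t) (X i)) * reluD (dot (Wt t j) (X i)) * Y i| *
            |dot (X i) (X k)| ≤ (3/5)*((11/10)*M) :=
              mul_le_mul hc (hXc i k hik) (abs_nonneg _) (by norm_num)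
          _ = (33/50)*M := by ring
      have hsum : |∑ i ∈ Finset.univ.erase k,
          (lossG (Y i * nnet a (Wt t) (X i)) * reluD (dot (Wt t j) (X i)) * Y i) *
            dot (X i) (X k)| ≤ (n:ℝ)*((33/50)*M) := by
        refine le_trans (Finset.abs_sum_le_sum_abs _ _) ?_
        calc ∑ i ∈ Finset.univ.erase k, |(lossG (Y i * nnet a (Wt t) (X i)) *
              reluD (dot (Wt t j) (X i)) * Y i) * dot (X i) (X k)| ≤
            ∑ _i ∈ Finset.univ.erase k, (33/50)*M := Finset.sum_le_sum hterm
          _ = ((Finset.univ.erase k).card : ℝ) * ((33/50)*M) := by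
              rw [Finset.sum_const, nsmul_eq_mul]
          _ ≤ (n:ℝ)*((33/50)*M) := by
              have hcard : ((Finset.univ.erase k).card : ℝ) ≤ (n:ℝ) := by
                have h := Finset.card_erase_le (a := k) (s := (Finset.univ : Finset (Fin n)))
                calc ((Finset.univ.erase k).card : ℝ) ≤
                    ((Finset.univ : Finset (Fin n)).card : ℝ) := by exact_mod_cast h
                  _ = (n:ℝ) := by simp
              exact mul_le_mul_of_nonneg_right hcard (by positivity)
      have heq : α/((n:ℝ)*sm) * ((n:ℝ)*((33/50)*M)) = (33/50)*(α*M/sm) := by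
        field_simp
      calc α/((n:ℝ)*sm) * |∑ i ∈ Finset.univ.erase k,
            (lossG (Y i * nnet a (Wt t) (X i)) * reluD (dot (Wt t j) (X i)) * Y i) *
              dot (X i) (X k)| ≤ α/((n:ℝ)*sm) * ((n:ℝ)*((33/50)*M)) :=
            mul_le_mul_of_nonneg_left hsum (by positivity)
        _ = (33/50)*(α*M/sm) := heq
        _ ≤ (2/3)*(α*M/sm) := by
            have h : (0:ℝ) ≤ α*M/sm := by positivity
            linarith only [h]
    constructor
    · intro hact
      have hrel : reluD (dot (Wt t j) (X k)) = 1 := reluD_of_pos' hact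
      have hgl := hglb t k ht
      have hd1 := (hXs k).1
      have hgd : (p:ℝ)/4 ≤ lossG (Y k * nnet a (Wt t) (X k)) * dot (X k) (X k) := by
        have h := mul_le_mul hgl hd1 hppos.le (by linarith only [hgl, lossG_pos' (Y k * nnet a (Wt t) (X k))])
        linarith only [h]
      have hAsm : (0:ℝ) < α/((n:ℝ)*sm) := by positivity
      have hcmp : 2*(α*M/sm) ≤ (α/((n:ℝ)*sm))*((p:ℝ)/4) := by
        have e2 : (α/((n:ℝ)*sm))*((p:ℝ)/4) - 2*(α*M/sm) =
            (α/((n:ℝ)*sm))*(((p:ℝ) - 8*(n:ℝ)*M)/4) := by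
          field_simp; ring
        have h := mul_nonneg hAsm.le
          (show (0:ℝ) ≤ ((p:ℝ) - 8*(n:ℝ)*M)/4 by linarith only [h8nM])
        linarith only [e2, h]
      constructor
      · intro he
        have hmain : 2*(α*M/sm) ≤ (α*a j/(n:ℝ))*((lossG (Y k * nnet a (Wt t) (X k)) *
            reluD (dot (Wt t j) (X k)) * Y k) * dot (X k) (X k)) := by
          rw [hrel]
          have e1 : (α*a j/(n:ℝ))*((lossG (Y k * nnet a (Wt t) (X k)) * 1 * Y k) *
              dot (X k) (X k)) = (α/((n:ℝ)*sm))*(lossG (Y k * nnet a (Wt t) (X k)) *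
              dot (X k) (X k)) := by
            rw [show α*a j/(n:ℝ)*((lossG (Y k * nnet a (Wt t) (X k)) * 1 * Y k) *
                dot (X k) (X k)) = (α/(n:ℝ))*(a j * Y k)*(lossG (Y k * nnet a (Wt t) (X k)) *
                dot (X k) (X k)) from by ring, he]
            field_simp
          rw [e1]
          calc 2*(α*M/sm) ≤ (α/((n:ℝ)*sm))*((p:ℝ)/4) := hcmp
            _ ≤ (α/((n:ℝ)*sm))*(lossG (Y k * nnet a (Wt t) (X k)) * dot (X k) (X k)) :=
              mul_le_mul_of_nonneg_left hgd hAsm.le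
        rw [hnext]
        have hr1 := (abs_le.mp hrest).1
        linarith only [hmain, hr1]
      · intro he
        have hmain : (α*a j/(n:ℝ))*((lossG (Y k * nnet a (Wt t) (X k)) *
            reluD (dot (Wt t j) (X k)) * Y k) * dot (X k) (X k)) ≤ -(2*(α*M/sm)) := by
          rw [hrel]
          have e1 : (α*a j/(n:ℝ))*((lossG (Y k * nnet a (Wt t) (X k)) * 1 * Y k) *
              dot (X k) (X k)) = -((α/((n:ℝ)*sm))*(lossG (Y k * nnet a (Wt t) (X k)) *
              dot (X k) (X k))) := by
            rw [show α*a j/(n:ℝ)*((lossG (Y k * nnet a (Wt t) (X k)) * 1 * Y k) *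
                dot (X k) (X k)) = (α/(n:ℝ))*(a j * Y k)*(lossG (Y k * nnet a (Wt t) (X k)) *
                dot (X k) (X k)) from by ring, he]
            field_simp
          rw [e1]
          have h := mul_le_mul_of_nonneg_left hgd hAsm.le
          linarith only [h, hcmp]
        rw [hnext]
        have hr2 := (abs_le.mp hrest).2
        linarith only [hmain, hr2]
    · intro hinact
      have hrel : reluD (dot (Wt t j) (X k)) = 0 := reluD_of_nonpos' hinact
      rw [hnext, hrel]
      have e : dot (Wt t j) (X k) +
          (α*a j/(n:ℝ))*((lossG (Y k * nnet a (Wt t) (X k)) * 0 * Y k) * dot (X k) (X k)) +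
          (α*a j/(n:ℝ))*∑ i ∈ Finset.univ.erase k,
            (lossG (Y i * nnet a (Wt t) (X i)) * reluD (dot (Wt t j) (X i)) * Y i) *
              dot (X i) (X k) - dot (Wt t j) (X k) =
          (α*a j/(n:ℝ))*∑ i ∈ Finset.univ.erase k,
            (lossG (Y i * nnet a (Wt t) (X i)) * reluD (dot (Wt t j) (X i)) * Y i) *
              dot (X i) (X k) := by ring
      rw [e]
      exact hrest
  have hBpos : (0:ℝ) < α*M/sm := by positivity
  have ediv : α/sm*M = α*M/sm := div_mul_eq_mul_div α sm M
  -- E2 invariant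
  have hE2' : a j * Y k = -(1/sm) → ∀ t : ℕ, (t:ℝ) ≤ T - 2 →
      dot (Wt t j) (X k) ≤ α/sm*M := by
    intro he t
    induction t with
    | zero =>
      intro _
      have h1 := hW0d j k
      have h2 : dot (Wt 0 j) (X k) = dot (W0 j) (X k) := rfl
      have h3 : 2*winit*sm*(p:ℝ) ≤ α/sm*M := by
        rw [show α/sm*M = (α*M)/sm from by ring, ← sub_nonneg]
        have e : (α*M)/sm - 2*winit*sm*(p:ℝ) = (α*M - 2*winit*(m:ℝ)*(p:ℝ))/sm := by
          rw [← hmm]; field_simp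
        rw [e]
        exact div_nonneg (by linarith only [h2wmp]) hsmpos.le
      rw [h2]
      linarith only [h3, (abs_le.mp h1).2]
    | succ t ih =>
      intro ht1
      have ht' : (t:ℝ) ≤ T - 2 := by
        push_cast at ht1 ⊢; linarith only [ht1]
      have htT : (t:ℝ) ≤ T := by linarith only [ht']
      have hcur := ih ht'
      rcases le_or_gt (dot (Wt t j) (X k)) 0 with hc | hc
      · have h1 := (hkey t htT).2 hc
        have h2 := (abs_le.mp h1).2
        linarith only [h2, hc, hBpos, ediv]
      · have h1 := ((hkey t htT).1 hc).2 he
        linarith only [h1, hcur, hBpos, ediv]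
  -- final assembly
  refine ⟨?_, ?_, ?_⟩
  · -- E1
    intro hpos s t _hs ht hst hact
    have he : a j * Y k = 1/sm := by
      have h1 : |a j * Y k| = 1/sm := by rw [abs_mul, haj, hY1, mul_one]
      rwa [abs_of_pos hpos] at h1
    have hgen : ∀ t', s ≤ t' → (t':ℝ) ≤ T - 2 → 0 < dot (Wt t' j) (X k) := by
      intro t' hst'
      induction t', hst' using Nat.le_induction with
      | base => intro _; exact hact
      | succ t' _hst' ih =>
        intro ht1
        have ht'2 : (t':ℝ) ≤ T - 2 := by
          push_cast at ht1 ⊢; linarith only [ht1]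
        have htT : (t':ℝ) ≤ T := by linarith only [ht'2]
        have hcur := ih ht'2
        have h1 := ((hkey t' htT).1 hcur).1 he
        linarith only [h1, hcur, hBpos]
    exact hgen t hst ht
  · -- E2
    intro hneg t ht
    have he : a j * Y k = -(1/sm) := by
      have h1 : |a j * Y k| = 1/sm := by rw [abs_mul, haj, hY1, mul_one]
      rw [abs_of_neg hneg] at h1
      linarith only [h1]
    exact hE2' he t ht
  · -- E3
    intro hneg t ht hact
    have he : a j * Y k = -(1/sm) := by
      have h1 : |a j * Y k| = 1/sm := by rw [abs_mul, haj, hY1, mul_one]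
      rw [abs_of_neg hneg] at h1
      linarith only [h1]
    have htT : (t:ℝ) ≤ T := by linarith only [ht]
    have hcur := hE2' he t (by linarith only [ht])
    have hstep := ((hkey t htT).1 hact).2 he
    linarith only [hcur, hstep, hBpos, ediv]

end XOR
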